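/- arXiv:2203.01440 — 7 statements merged into one kernel-verified Lean document; each statement's English description precedes it below -/
import Mathlib

section
/- Basic composition of differentially private mechanisms (pairwise form): Let μ₁ and μ₁' be probability measures on a measurable space Ω₁ such that for every measurable set S ⊆ Ω₁, μ₁(S) ≤ e^{ε₁}·μ₁'(S) + δ₁ and μ₁'(S) ≤ e^{ε₁}·μ₁(S) + δ₁. Let κ, κ' be Markov kernels from Ω₁ to a measurable space Ω₂ such that for every m ∈ Ω₁ and every measurable set T ⊆ Ω₂, κ(m)(T) ≤ e^{ε₂}·κ'(m)(T) + δ₂ and κ'(m)(T) ≤ e^{ε₂}·κ(m)(T) + δ₂. Then for every measurable set T ⊆ Ω₂, (μ₁.bind κ)(T) ≤ e^{ε₁+ε₂}·(μ₁'.bind κ')(T) + δ₁ + δ₂. -/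
open MeasureTheory ProbabilityTheory Real Set

lemma dp_lintegral_le {Ω : Type*} [MeasurableSpace Ω]
    (μ ν : Measure Ω) (C d : ENNReal)
    (h : ∀ S : Set Ω, MeasurableSet S → μ S ≤ C * ν S + d)
    (g : Ω → ENNReal) (hg : Measurable g) (hg1 : ∀ a, g a ≤ 1) :
    ∫⁻ a, g a ∂μ ≤ C * ∫⁻ a, g a ∂ν + d := by
  set f : Ω → ℝ := fun a => (g a).toReal with hf
  have hfm : Measurable f := hg.ennreal_toReal
  have hfr : ∀ a, ENNReal.ofReal (f a) = g a := fun a =>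
    ENNReal.ofReal_toReal (lt_of_le_of_lt (hg1 a) ENNReal.one_lt_top).ne
  have hf1 : ∀ a, f a ≤ 1 := fun a => by
    rw [hf]
    exact ENNReal.toReal_le_of_le_ofReal zero_le_one (by simpa using hg1 a)
  have key : ∀ ρ : Measure Ω,
      ∫⁻ a, g a ∂ρ = ∫⁻ t in Ioi (0:ℝ), ρ {a | t ≤ f a} := by
    intro ρ
    rw [← lintegral_eq_lintegral_meas_le ρ (ae_of_all _ fun a => ENNReal.toReal_nonneg)
      hfm.aemeasurable]
    exact lintegral_congr fun a => (hfr a).symm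
  have hmeas : ∀ ρ : Measure Ω, Measurable (fun t : ℝ => ρ {a | t ≤ f a}) := by
    intro ρ
    apply Antitone.measurable
    intro s t hst
    exact measure_mono fun a ha => le_trans hst ha
  rw [key μ, key ν]
  have hempty : ∀ t : ℝ, 1 < t → {a | t ≤ f a} = ∅ := by
    intro t ht
    ext a
    simp only [mem_setOf_eq, mem_empty_iff_false, iff_false, not_le]
    exact lt_of_le_of_lt (hf1 a) ht
  calc ∫⁻ t in Ioi (0:ℝ), μ {a | t ≤ f a}
      ≤ ∫⁻ t in Ioi (0:ℝ),
          (Ioc (0:ℝ) 1).indicator (fun t => C * ν {a | t ≤ f a} + d) t := by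
        apply setLIntegral_mono' measurableSet_Ioi
        intro t ht0
        rcases le_or_gt t 1 with ht | ht
        · rw [indicator_of_mem (Set.mem_Ioc.mpr ⟨ht0, ht⟩)]
          exact h _ (measurableSet_le measurable_const hfm)
        · rw [hempty t ht, indicator_of_notMem (fun hm => absurd hm.2 (not_le_of_gt ht))]
          simp
    _ = ∫⁻ t in Ioc (0:ℝ) 1, (C * ν {a | t ≤ f a} + d) := by
        rw [lintegral_indicator measurableSet_Ioc,
          Measure.restrict_restrict measurableSet_Ioc]
        congr 1
        rw [Set.Ioc_inter_Ioi]
        simp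
    _ = C * (∫⁻ t in Ioc (0:ℝ) 1, ν {a | t ≤ f a}) + d * volume (Ioc (0:ℝ) 1) := by
        rw [lintegral_add_right _ measurable_const, lintegral_const_mul _ (hmeas ν),
          lintegral_const, Measure.restrict_apply_univ]
    _ ≤ C * (∫⁻ t in Ioi (0:ℝ), ν {a | t ≤ f a}) + d := by
        have h2 : volume (Ioc (0:ℝ) 1) = 1 := by simp
        rw [h2, mul_one]
        gcongr
        exact Ioc_subset_Ioi_self

theorem dp_basic_composition
    {Ω₁ Ω₂ : Type*} [MeasurableSpace Ω₁] [MeasurableSpace Ω₂]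
    (μ₁ μ₁' : Measure Ω₁) [IsProbabilityMeasure μ₁] [IsProbabilityMeasure μ₁']
    (κ κ' : Kernel Ω₁ Ω₂) [IsMarkovKernel κ] [IsMarkovKernel κ']
    (ε₁ ε₂ δ₁ δ₂ : ℝ) (hε₁ : 0 ≤ ε₁) (hε₂ : 0 ≤ ε₂) (hδ₁ : 0 ≤ δ₁) (hδ₂ : 0 ≤ δ₂)
    (h₁ : ∀ S : Set Ω₁, MeasurableSet S →
      μ₁ S ≤ ENNReal.ofReal (exp ε₁) * μ₁' S + ENNReal.ofReal δ₁)
    (h₁' : ∀ S : Set Ω₁, MeasurableSet S →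
      μ₁' S ≤ ENNReal.ofReal (exp ε₁) * μ₁ S + ENNReal.ofReal δ₁)
    (h₂ : ∀ (m : Ω₁) (T : Set Ω₂), MeasurableSet T →
      κ m T ≤ ENNReal.ofReal (exp ε₂) * κ' m T + ENNReal.ofReal δ₂)
    (h₂' : ∀ (m : Ω₁) (T : Set Ω₂), MeasurableSet T →
      κ' m T ≤ ENNReal.ofReal (exp ε₂) * κ m T + ENNReal.ofReal δ₂) :
    ∀ T : Set Ω₂, MeasurableSet T →
      (μ₁.bind fun a => κ a) T ≤
        ENNReal.ofReal (exp (ε₁ + ε₂)) * (μ₁'.bind fun a => κ' a) T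
          + ENNReal.ofReal δ₁ + ENNReal.ofReal δ₂ := by
  intro T hT
  set A := ENNReal.ofReal (exp ε₁) with hA
  set B := ENNReal.ofReal (exp ε₂) with hB
  set dd₁ := ENNReal.ofReal δ₁
  set dd₂ := ENNReal.ofReal δ₂
  have hgm : Measurable fun a => κ' a T := Kernel.measurable_coe κ' hT
  have hfm : Measurable fun a => κ a T := Kernel.measurable_coe κ hT
  set G : Ω₁ → ENNReal := fun a => min 1 (B * κ' a T) with hG
  have hGm : Measurable G := Measurable.min measurable_const (hgm.const_mul B)
  have hG1 : ∀ a, G a ≤ 1 := fun a => min_le_left _ _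
  have hbind : (μ₁.bind fun a => κ a) T = ∫⁻ a, κ a T ∂μ₁ :=
    Measure.bind_apply hT κ.measurable.aemeasurable
  have hbind' : (μ₁'.bind fun a => κ' a) T = ∫⁻ a, κ' a T ∂μ₁' :=
    Measure.bind_apply hT κ'.measurable.aemeasurable
  have hpt : ∀ a, κ a T ≤ G a + dd₂ := by
    intro a
    rcases le_total 1 (B * κ' a T) with hc | hc
    · calc κ a T ≤ 1 := prob_le_one
        _ = G a := by rw [hG]; simp [min_eq_left hc]
        _ ≤ G a + dd₂ := le_self_add
    · calc κ a T ≤ B * κ' a T + dd₂ := h₂ a T hT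
        _ = G a + dd₂ := by rw [hG]; simp [min_eq_right hc]
  have step1 : ∫⁻ a, κ a T ∂μ₁ ≤ (∫⁻ a, G a ∂μ₁) + dd₂ := by
    calc ∫⁻ a, κ a T ∂μ₁ ≤ ∫⁻ a, (G a + dd₂) ∂μ₁ := lintegral_mono hpt
      _ = (∫⁻ a, G a ∂μ₁) + dd₂ := by
          rw [lintegral_add_right _ measurable_const, lintegral_const, measure_univ, mul_one]
  have step2 : ∫⁻ a, G a ∂μ₁ ≤ A * (∫⁻ a, G a ∂μ₁') + dd₁ :=
    dp_lintegral_le μ₁ μ₁' A dd₁ h₁ G hGm hG1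
  have step3 : ∫⁻ a, G a ∂μ₁' ≤ B * ∫⁻ a, κ' a T ∂μ₁' := by
    rw [← lintegral_const_mul _ hgm]
    exact lintegral_mono fun a => min_le_right _ _
  have hAB : ENNReal.ofReal (exp (ε₁ + ε₂)) = A * B := by
    rw [hA, hB, ← ENNReal.ofReal_mul (exp_pos ε₁).le, ← exp_add]
  calc (μ₁.bind fun a => κ a) T = ∫⁻ a, κ a T ∂μ₁ := hbind
    _ ≤ (∫⁻ a, G a ∂μ₁) + dd₂ := step1
    _ ≤ (A * (∫⁻ a, G a ∂μ₁') + dd₁) + dd₂ := by gcongr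
    _ ≤ (A * (B * ∫⁻ a, κ' a T ∂μ₁') + dd₁) + dd₂ := by gcongr
    _ = ENNReal.ofReal (exp (ε₁ + ε₂)) * (μ₁'.bind fun a => κ' a) T + dd₁ + dd₂ := by
        rw [hbind', hAB, mul_assoc]
end

section
/- Composition with a deterministic post-processing step that agrees outside a low-probability bad set: Let μ and μ' be probability measures on a measurable space Ω such that for every measurable set S ⊆ Ω, μ(S) ≤ e^ε·μ'(S) + δ and μ'(S) ≤ e^ε·μ(S) + δ. Let B ⊆ Ω be a measurable 'bad' set with μ(B) ≤ δ* and μ'(B) ≤ δ*. Let f, g : Ω → M be measurable maps into a measurable space M such that f(ω) = g(ω) for every ω ∉ B. Then for every measurable set T ⊆ M, (μ.map f)(T) ≤ e^ε·(μ'.map g)(T) + δ + δ*, and symmetrically (μ'.map g)(T) ≤ e^ε·(μ.map f)(T) + δ + δ*. -/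
open MeasureTheory Real

theorem dp_postprocess_agree_outside_bad_set
    {Ω M : Type*} [MeasurableSpace Ω] [MeasurableSpace M]
    (μ μ' : Measure Ω) [IsProbabilityMeasure μ] [IsProbabilityMeasure μ']
    (ε δ δstar : ℝ) (hε : 0 ≤ ε) (hδ : 0 ≤ δ) (hδstar : 0 ≤ δstar)
    (hDP : ∀ S : Set Ω, MeasurableSet S →
      μ S ≤ ENNReal.ofReal (exp ε) * μ' S + ENNReal.ofReal δ)
    (hDP' : ∀ S : Set Ω, MeasurableSet S →
      μ' S ≤ ENNReal.ofReal (exp ε) * μ S + ENNReal.ofReal δ)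
    (B : Set Ω) (hB : MeasurableSet B)
    (hμB : μ B ≤ ENNReal.ofReal δstar) (hμ'B : μ' B ≤ ENNReal.ofReal δstar)
    (f g : Ω → M) (hf : Measurable f) (hg : Measurable g)
    (hfg : ∀ ω ∉ B, f ω = g ω) :
    ∀ T : Set M, MeasurableSet T →
      (μ.map f) T ≤ ENNReal.ofReal (exp ε) * (μ'.map g) T
          + ENNReal.ofReal δ + ENNReal.ofReal δstar ∧
      (μ'.map g) T ≤ ENNReal.ofReal (exp ε) * (μ.map f) T
          + ENNReal.ofReal δ + ENNReal.ofReal δstar := by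
  intro T hT
  rw [Measure.map_apply hf hT, Measure.map_apply hg hT]
  have hsub1 : f ⁻¹' T ⊆ g ⁻¹' T ∪ B := by
    intro ω hω
    by_cases h : ω ∈ B
    · exact Or.inr h
    · exact Or.inl (by simpa [hfg ω h] using hω)
  have hsub2 : g ⁻¹' T ⊆ f ⁻¹' T ∪ B := by
    intro ω hω
    by_cases h : ω ∈ B
    · exact Or.inr h
    · exact Or.inl (by simpa [hfg ω h] using hω)
  constructor
  · calc μ (f ⁻¹' T) ≤ μ (g ⁻¹' T ∪ B) := measure_mono hsub1
      _ ≤ μ (g ⁻¹' T) + μ B := measure_union_le _ _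
      _ ≤ (ENNReal.ofReal (exp ε) * μ' (g ⁻¹' T) + ENNReal.ofReal δ)
          + ENNReal.ofReal δstar :=
        add_le_add (hDP _ (hg hT)) hμB
  · calc μ' (g ⁻¹' T) ≤ μ' (f ⁻¹' T ∪ B) := measure_mono hsub2
      _ ≤ μ' (f ⁻¹' T) + μ' B := measure_union_le _ _
      _ ≤ (ENNReal.ofReal (exp ε) * μ (f ⁻¹' T) + ENNReal.ofReal δ)
          + ENNReal.ofReal δstar :=
        add_le_add (hDP' _ (hf hT)) hμ'B
end

section
/- Sensitivity of the agreement statistic at the differing edge: Let V be a finite type, let G and G' be simple graphs on V such that G ≤ G' and the edge set of G' equals the edge set of G together with exactly one additional edge {x,y} (where x ≠ y and x, y are not adjacent in G). Let β be a real number with 0 ≤ β ≤ 1. Writing N_H(v) = {v} ∪ (neighbors of v in H) and d_H(v) = |N_H(v)| for a graph H, we have |(|N_{G'}(x) △ N_{G'}(y)| − β·max(d_{G'}(x), d_{G'}(y))) − (|N_G(x) △ N_G(y)| − β·max(d_G(x), d_G(y)))| ≤ 2 + β (as real numbers). -/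
/-- The closed neighborhood of a vertex: the vertex together with its neighbors. -/
def closedNbhd {V : Type*} [Fintype V] [DecidableEq V]
    (H : SimpleGraph V) [DecidableRel H.Adj] (v : V) : Finset V :=
  insert v (H.neighborFinset v)

private lemma symmDiff_insert_aux {V : Type*} [DecidableEq V] (A B : Finset V) (x y : V)
    (hxA : x ∈ A) (hxB : x ∉ B) (hyB : y ∈ B) (hyA : y ∉ A) (hxy : x ≠ y) :
    (symmDiff A B).card = (symmDiff (insert y A) (insert x B)).card + 2 := by
  have hxΔ' : x ∉ symmDiff (insert y A) (insert x B) := by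
    simp only [Finset.mem_symmDiff, Finset.mem_insert]
    tauto
  have hyΔ' : y ∉ symmDiff (insert y A) (insert x B) := by
    simp only [Finset.mem_symmDiff, Finset.mem_insert]
    tauto
  have hΔ : symmDiff A B = insert x (insert y (symmDiff (insert y A) (insert x B))) := by
    ext a
    simp only [Finset.mem_symmDiff, Finset.mem_insert]
    by_cases hax : a = x
    · subst hax; tauto
    by_cases hay : a = y
    · subst hay; tauto
    · tauto
  rw [hΔ, Finset.card_insert_of_notMem, Finset.card_insert_of_notMem hyΔ']
  · simp only [Finset.mem_insert]
    tauto

theorem agreement_statistic_sensitivity_differing_edge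
    {V : Type*} [Fintype V] [DecidableEq V]
    (G G' : SimpleGraph V) [DecidableRel G.Adj] [DecidableRel G'.Adj]
    (x y : V) (hxy : x ≠ y) (hnadj : ¬ G.Adj x y)
    (hle : G ≤ G')
    (hedge : G'.edgeSet = insert s(x, y) G.edgeSet)
    (β : ℝ) (hβ0 : 0 ≤ β) (hβ1 : β ≤ 1) :
    |((((symmDiff (closedNbhd G' x) (closedNbhd G' y)).card : ℝ)
        - β * max ((closedNbhd G' x).card : ℝ) ((closedNbhd G' y).card : ℝ))
      - (((symmDiff (closedNbhd G x) (closedNbhd G y)).card : ℝ)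
        - β * max ((closedNbhd G x).card : ℝ) ((closedNbhd G y).card : ℝ)))|
      ≤ 2 + β := by
  have hadj : ∀ a b, G'.Adj a b ↔ G.Adj a b ∨ (a = x ∧ b = y) ∨ (a = y ∧ b = x) := by
    intro a b
    rw [← SimpleGraph.mem_edgeSet, hedge, Set.mem_insert_iff, SimpleGraph.mem_edgeSet,
      Sym2.eq_iff]
    tauto
  set A := closedNbhd G x with hA
  set B := closedNbhd G y with hB
  have hNX : closedNbhd G' x = insert y A := by
    ext a
    simp only [hA, closedNbhd, Finset.mem_insert, SimpleGraph.mem_neighborFinset, hadj]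
    constructor
    · rintro (h | h | ⟨h1, h2⟩ | ⟨h1, h2⟩) <;> tauto
    · rintro (h | h | h) <;> subst_vars <;> tauto
  have hNY : closedNbhd G' y = insert x B := by
    ext a
    simp only [hB, closedNbhd, Finset.mem_insert, SimpleGraph.mem_neighborFinset, hadj]
    constructor
    · rintro (h | h | ⟨h1, h2⟩ | ⟨h1, h2⟩) <;> tauto
    · rintro (h | h | h) <;> subst_vars <;> tauto
  have hxA : x ∈ A := by simp [hA, closedNbhd]
  have hyB : y ∈ B := by simp [hB, closedNbhd]
  have hyA : y ∉ A := by
    simp only [hA, closedNbhd, Finset.mem_insert, SimpleGraph.mem_neighborFinset]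
    rintro (h | h)
    · exact hxy h.symm
    · exact hnadj h
  have hxB : x ∉ B := by
    simp only [hB, closedNbhd, Finset.mem_insert, SimpleGraph.mem_neighborFinset]
    rintro (h | h)
    · exact hxy h
    · exact hnadj h.symm
  have hcardΔ := symmDiff_insert_aux A B x y hxA hxB hyB hyA hxy
  have hcardX : (insert y A).card = A.card + 1 := Finset.card_insert_of_notMem hyA
  have hcardY : (insert x B).card = B.card + 1 := Finset.card_insert_of_notMem hxB
  rw [hNX, hNY, hcardΔ, hcardX, hcardY]
  push_cast
  rw [max_add_add_right (A.card : ℝ) (B.card : ℝ) 1]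
  have h : (((symmDiff (insert y A) (insert x B)).card : ℝ)
        - β * (max (A.card : ℝ) (B.card : ℝ) + 1))
      - (((symmDiff (insert y A) (insert x B)).card : ℝ) + 2
        - β * max (A.card : ℝ) (B.card : ℝ)) = -(2 + β) := by ring
  rw [h, abs_neg, abs_of_nonneg (by linarith)]
end

section
/- Sensitivity of the agreement statistic at an incident edge: Let V be a finite type, let G and G' be simple graphs on V such that G ≤ G' and the edge set of G' equals the edge set of G together with exactly one additional edge {x,y} (where x ≠ y and x, y are not adjacent in G). Let β be a real number with 0 ≤ β ≤ 1, and let v ∈ V with v ≠ x and v ≠ y. Writing N_H(u) = {u} ∪ (neighbors of u in H) and d_H(u) = |N_H(u)| for a graph H, we have |(|N_{G'}(x) △ N_{G'}(v)| − β·max(d_{G'}(x), d_{G'}(v))) − (|N_G(x) △ N_G(v)| − β·max(d_G(x), d_G(v)))| ≤ 1 + β (as real numbers). -/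
set_option maxHeartbeats 1000000 in
theorem agreement_statistic_sensitivity_incident_edge
    {V : Type*} [Fintype V] [DecidableEq V]
    (G G' : SimpleGraph V) [DecidableRel G.Adj] [DecidableRel G'.Adj]
    (x y : V) (hxy : x ≠ y) (hnadj : ¬ G.Adj x y)
    (hle : G ≤ G')
    (hedge : G'.edgeSet = insert s(x, y) G.edgeSet)
    (β : ℝ) (hβ0 : 0 ≤ β) (hβ1 : β ≤ 1)
    (v : V) (hvx : v ≠ x) (hvy : v ≠ y) :
    |((((symmDiff (closedNbhd G' x) (closedNbhd G' v)).card : ℝ)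
        - β * max ((closedNbhd G' x).card : ℝ) ((closedNbhd G' v).card : ℝ))
      - (((symmDiff (closedNbhd G x) (closedNbhd G v)).card : ℝ)
        - β * max ((closedNbhd G x).card : ℝ) ((closedNbhd G v).card : ℝ)))|
      ≤ 1 + β := by
  have hadj : ∀ a b, G'.Adj a b ↔ G.Adj a b ∨ (a = x ∧ b = y) ∨ (a = y ∧ b = x) := by
    intro a b
    rw [← SimpleGraph.mem_edgeSet, hedge, Set.mem_insert_iff, Sym2.eq_iff,
      SimpleGraph.mem_edgeSet]
    tauto
  -- v's closed neighborhood is unchanged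
  have hNv : closedNbhd G' v = closedNbhd G v := by
    unfold closedNbhd
    congr 1
    ext u
    simp only [SimpleGraph.mem_neighborFinset, hadj]
    constructor
    · rintro (h | ⟨rfl, rfl⟩ | ⟨rfl, rfl⟩)
      · exact h
      · exact absurd rfl hvx
      · exact absurd rfl hvy
    · exact fun h => Or.inl h
  -- x's closed neighborhood gains y
  have hyA : y ∉ closedNbhd G x := by
    simp only [closedNbhd, Finset.mem_insert, SimpleGraph.mem_neighborFinset]
    rintro (rfl | h)
    · exact hxy rfl
    · exact hnadj h
  have hNx : closedNbhd G' x = insert y (closedNbhd G x) := by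
    unfold closedNbhd
    ext u
    simp only [Finset.mem_insert, SimpleGraph.mem_neighborFinset, hadj]
    by_cases h1 : u = y <;> by_cases h2 : u = x <;>
      simp [h1, h2, hxy, hxy.symm, hnadj] <;> tauto
  set A := closedNbhd G x with hA
  set B := closedNbhd G v with hB
  rw [hNv, hNx]
  have hcardA : ((insert y A).card : ℝ) = (A.card : ℝ) + 1 := by
    rw [Finset.card_insert_of_notMem hyA]; push_cast; ring
  -- symmetric difference card changes by ±1
  have hsd : ((symmDiff (insert y A) B).card : ℝ) = (symmDiff A B).card + 1 ∨
      ((symmDiff (insert y A) B).card : ℝ) = (symmDiff A B).card - 1 := by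
    by_cases hyB : y ∈ B
    · right
      have heq : symmDiff (insert y A) B = (symmDiff A B).erase y := by
        ext u
        by_cases hu : u = y
        · subst hu
          simp [Finset.mem_symmDiff, hyA, hyB]
        · simp only [Finset.mem_symmDiff, Finset.mem_insert, Finset.mem_erase, hu]
          tauto
      have hymem : y ∈ symmDiff A B := by
        simp [Finset.mem_symmDiff, hyA, hyB]
      rw [heq, Finset.card_erase_of_mem hymem]
      have : 1 ≤ (symmDiff A B).card := Finset.card_pos.mpr ⟨y, hymem⟩
      push_cast [this]
      ring
    · left
      have heq : symmDiff (insert y A) B = insert y (symmDiff A B) := by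
        ext u
        by_cases hu : u = y
        · subst hu
          simp [Finset.mem_symmDiff, hyA, hyB]
        · simp only [Finset.mem_symmDiff, Finset.mem_insert, hu]
          tauto
      have hynm : y ∉ symmDiff A B := by
        simp [Finset.mem_symmDiff, hyA, hyB]
      rw [heq, Finset.card_insert_of_notMem hynm]
      push_cast
      ring
  rw [hcardA]
  set s := ((symmDiff A B).card : ℝ)
  set s' := ((symmDiff (insert y A) B).card : ℝ)
  set d := ((A.card : ℝ))
  set e := ((B.card : ℝ))
  have hm1 : max d e ≤ max (d + 1) e := max_le_max (by linarith) le_rfl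
  have hm2 : max (d + 1) e ≤ max d e + 1 :=
    max_le (by linarith [le_max_left d e]) (by linarith [le_max_right d e])
  rw [abs_le]
  rcases hsd with h | h <;> constructor <;> nlinarith [mul_le_mul_of_nonneg_left hm1 hβ0,
    mul_le_mul_of_nonneg_left hm2 hβ0]
end

section
/- Heavy–light case (combinatorial core of Lemma 4.7, with corrected constants): Let V be a finite type and let β, β', λ, λ', T be nonnegative real numbers with β + β' < 1, such that C := 1/2 − (β+β')/(2(1−β−β')) − (λ+λ') > 0 and T ≥ 2/(C·(2−β−β')). Let N_x, N_y, N_z, Ñ_x, Ñ_z be finite subsets of V with Ñ_x ⊆ N_x and Ñ_z ⊆ N_z, such that: |N_x| ≥ T and |N_y| ≥ T; |N_x △ N_y| < (β+β')·max(|N_x|, |N_y|); |N_y △ N_z| < (β+β')·max(|N_y|, |N_z|); |N_x \ Ñ_x| < (λ+λ')·|N_x|; and |N_z \ Ñ_z| < (λ+λ')·|N_z|. Then |Ñ_x ∩ Ñ_z| ≥ 2. -/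
/-- Pure real-arithmetic core. -/
lemma heavy_light_arith
    (b l T a c d s1 t1 s2 t2 rx rz i j : ℝ)
    (hb0 : 0 ≤ b) (hl0 : 0 ≤ l) (hb1 : b < 1)
    (hC : 0 < 1 / 2 - b / (2 * (1 - b)) - l)
    (hT : T ≥ 2 / ((1 / 2 - b / (2 * (1 - b)) - l) * (2 - b)))
    (ha0 : 0 ≤ a) (hc0 : 0 ≤ c) (hd0 : 0 ≤ d)
    (hs1 : 0 ≤ s1) (ht1 : 0 ≤ t1) (hs2 : 0 ≤ s2) (ht2 : 0 ≤ t2)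
    (hrx0 : 0 ≤ rx) (hrz0 : 0 ≤ rz) (hj0 : 0 ≤ j)
    (hdx : a ≥ T) (hdy : c ≥ T)
    (hxy : s1 + t1 < b * max a c)
    (hyz : s2 + t2 < b * max c d)
    (hid1 : a + t1 = c + s1)
    (hid2 : c + t2 = d + s2)
    (hint : c ≤ i + t1 + s2)
    (hint2 : i ≤ j + rx + rz)
    (hrx : rx < l * a) (hrz : rz < l * d) :
    j ≥ 2 := by
  have h1b : (0:ℝ) < 1 - b := by linarith
  have hC2b : 0 < (1 / 2 - b / (2 * (1 - b)) - l) * (2 - b) :=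
    mul_pos hC (by linarith)
  have hTpos : 0 < T := lt_of_lt_of_le (by positivity) hT
  have hTC : 2 ≤ T * ((1 / 2 - b / (2 * (1 - b)) - l) * (2 - b)) := by
    rw [ge_iff_le, div_le_iff₀ hC2b] at hT; linarith
  have hK : (1 / 2 - b / (2 * (1 - b)) - l) * (2 * (1 - b))
      = 1 - 2 * b - 2 * l * (1 - b) := by
    field_simp; ring
  have hK0 : 0 < 1 - 2 * b - 2 * l * (1 - b) := by
    rw [← hK]; positivity
  -- max bounds
  have hM1 : (1 - b) * max a c ≤ a := by
    rcases le_total c a with h | h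
    · rw [max_eq_left h]; linarith [mul_nonneg hb0 ha0]
    · rw [max_eq_right h] at hxy ⊢; linarith
  have hM2 : (1 - b) * max c d ≤ d := by
    rcases le_total d c with h | h
    · rw [max_eq_left h] at hyz ⊢; linarith
    · rw [max_eq_right h]; linarith [mul_nonneg hb0 hd0]
  -- a + d ≥ (2 - b) * T
  have hd : (1 - b) * T ≤ d := by
    rcases le_total d c with h | h
    · rw [max_eq_left h] at hyz
      have h2 : (1 - b) * T ≤ (1 - b) * c := mul_le_mul_of_nonneg_left hdy h1b.le
      linarith
    · linarith [mul_nonneg hb0 hTpos.le]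
  have had : (2 - b) * T ≤ a + d := by linarith
  have hTK : 4 * (1 - b) ≤ T * (2 - b) * (1 - 2 * b - 2 * l * (1 - b)) := by
    have h5 := mul_le_mul_of_nonneg_left hTC (by positivity : (0:ℝ) ≤ 2 * (1 - b))
    calc 4 * (1 - b) = 2 * (1 - b) * 2 := by ring
      _ ≤ 2 * (1 - b) * (T * ((1 / 2 - b / (2 * (1 - b)) - l) * (2 - b))) := h5
      _ = T * (2 - b) * ((1 / 2 - b / (2 * (1 - b)) - l) * (2 * (1 - b))) := by ring
      _ = T * (2 - b) * (1 - 2 * b - 2 * l * (1 - b)) := by rw [hK]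
  -- prepared linear facts
  have hbM1 : b * ((1 - b) * max a c) ≤ b * a := mul_le_mul_of_nonneg_left hM1 hb0
  have hbM2 : b * ((1 - b) * max c d) ≤ b * d := mul_le_mul_of_nonneg_left hM2 hb0
  have hKad : (1 - 2 * b - 2 * l * (1 - b)) * ((2 - b) * T)
      ≤ (1 - 2 * b - 2 * l * (1 - b)) * (a + d) :=
    mul_le_mul_of_nonneg_left had hK0.le
  have hxy1 : (1 - b) * (s1 + t1) ≤ (1 - b) * (b * max a c) :=
    mul_le_mul_of_nonneg_left hxy.le h1b.le
  have hyz1 : (1 - b) * (s2 + t2) ≤ (1 - b) * (b * max c d) :=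
    mul_le_mul_of_nonneg_left hyz.le h1b.le
  have f1 : (1 - b) * c ≤ (1 - b) * (i + t1 + s2) :=
    mul_le_mul_of_nonneg_left hint h1b.le
  have f2 : (1 - b) * i ≤ (1 - b) * (j + rx + rz) :=
    mul_le_mul_of_nonneg_left hint2 h1b.le
  have f3 : (1 - b) * rx < (1 - b) * (l * a) :=
    mul_lt_mul_of_pos_left hrx h1b
  have f4 : (1 - b) * rz < (1 - b) * (l * d) :=
    mul_lt_mul_of_pos_left hrz h1b
  have f5 : (1 - b) * (a + t1) = (1 - b) * (c + s1) := by rw [hid1]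
  have f6 : (1 - b) * (c + t2) = (1 - b) * (d + s2) := by rw [hid2]
  have hkey : 2 * (1 - b) * 2 < 2 * (1 - b) * j := by
    linarith [f1, f2, f3, f4, f5, f6, hxy1, hyz1, hbM1, hbM2, hKad, hTK]
  have h2 : (2:ℝ) < j :=
    lt_of_mul_lt_mul_left (by linarith : (2 * (1 - b)) * 2 < (2 * (1 - b)) * j)
      (by positivity)
  linarith

theorem heavy_light_common_neighbors
    {V : Type*} [DecidableEq V]
    (β β' lam lam' T : ℝ)
    (hβ : 0 ≤ β) (hβ' : 0 ≤ β') (hlam : 0 ≤ lam) (hlam' : 0 ≤ lam')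
    (hββ' : β + β' < 1)
    (hC : 0 < 1 / 2 - (β + β') / (2 * (1 - β - β')) - (lam + lam'))
    (hT : T ≥ 2 / ((1 / 2 - (β + β') / (2 * (1 - β - β')) - (lam + lam')) * (2 - β - β')))
    (Nx Ny Nz Ntx Ntz : Finset V)
    (hsubx : Ntx ⊆ Nx) (hsubz : Ntz ⊆ Nz)
    (hdx : (Nx.card : ℝ) ≥ T) (hdy : (Ny.card : ℝ) ≥ T)
    (hagreexy : ((symmDiff Nx Ny).card : ℝ) < (β + β') * max (Nx.card : ℝ) (Ny.card : ℝ))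
    (hagreeyz : ((symmDiff Ny Nz).card : ℝ) < (β + β') * max (Ny.card : ℝ) (Nz.card : ℝ))
    (hlightx : ((Nx \ Ntx).card : ℝ) < (lam + lam') * Nx.card)
    (hlightz : ((Nz \ Ntz).card : ℝ) < (lam + lam') * Nz.card) :
    ((Ntx ∩ Ntz).card : ℝ) ≥ 2 := by
  have hsymm : ∀ s t : Finset V, (symmDiff s t).card = (s \ t).card + (t \ s).card := by
    intro s t
    rw [symmDiff_def, Finset.sup_eq_union, Finset.card_union_of_disjoint disjoint_sdiff_sdiff]
  have hid1 : Nx.card + (Ny \ Nx).card = Ny.card + (Nx \ Ny).card := by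
    have e1 := Finset.card_sdiff_add_card Ny Nx
    have e2 := Finset.card_sdiff_add_card Nx Ny
    rw [Finset.union_comm] at e1
    omega
  have hid2 : Ny.card + (Nz \ Ny).card = Nz.card + (Ny \ Nz).card := by
    have e1 := Finset.card_sdiff_add_card Nz Ny
    have e2 := Finset.card_sdiff_add_card Ny Nz
    rw [Finset.union_comm] at e1
    omega
  have hint : Ny.card ≤ (Nx ∩ Nz).card + (Ny \ Nx).card + (Ny \ Nz).card := by
    have hsub : Ny ⊆ (Nx ∩ Nz) ∪ ((Ny \ Nx) ∪ (Ny \ Nz)) := by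
      intro v hv
      simp only [Finset.mem_union, Finset.mem_inter, Finset.mem_sdiff]
      by_cases hvx : v ∈ Nx <;> by_cases hvz : v ∈ Nz <;> tauto
    calc Ny.card ≤ ((Nx ∩ Nz) ∪ ((Ny \ Nx) ∪ (Ny \ Nz))).card := Finset.card_le_card hsub
      _ ≤ (Nx ∩ Nz).card + ((Ny \ Nx) ∪ (Ny \ Nz)).card := Finset.card_union_le _ _
      _ ≤ (Nx ∩ Nz).card + ((Ny \ Nx).card + (Ny \ Nz).card) :=
          Nat.add_le_add_left (Finset.card_union_le _ _) _
      _ = (Nx ∩ Nz).card + (Ny \ Nx).card + (Ny \ Nz).card := by omega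
  have hint2 : (Nx ∩ Nz).card ≤ (Ntx ∩ Ntz).card + (Nx \ Ntx).card + (Nz \ Ntz).card := by
    have hsub : Nx ∩ Nz ⊆ (Ntx ∩ Ntz) ∪ ((Nx \ Ntx) ∪ (Nz \ Ntz)) := by
      intro v hv
      simp only [Finset.mem_inter, Finset.mem_sdiff, Finset.mem_union] at hv ⊢
      by_cases hvx : v ∈ Ntx <;> by_cases hvz : v ∈ Ntz <;> tauto
    calc (Nx ∩ Nz).card ≤ ((Ntx ∩ Ntz) ∪ ((Nx \ Ntx) ∪ (Nz \ Ntz))).card :=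
          Finset.card_le_card hsub
      _ ≤ (Ntx ∩ Ntz).card + ((Nx \ Ntx) ∪ (Nz \ Ntz)).card := Finset.card_union_le _ _
      _ ≤ (Ntx ∩ Ntz).card + ((Nx \ Ntx).card + (Nz \ Ntz).card) :=
          Nat.add_le_add_left (Finset.card_union_le _ _) _
      _ = (Ntx ∩ Ntz).card + (Nx \ Ntx).card + (Nz \ Ntz).card := by omega
  rw [hsymm] at hagreexy hagreeyz
  push_cast at hagreexy hagreeyz
  refine heavy_light_arith (β + β') (lam + lam') T (Nx.card : ℝ) (Ny.card : ℝ) (Nz.card : ℝ)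
    ((Nx \ Ny).card : ℝ) ((Ny \ Nx).card : ℝ) ((Ny \ Nz).card : ℝ) ((Nz \ Ny).card : ℝ)
    ((Nx \ Ntx).card : ℝ) ((Nz \ Ntz).card : ℝ) ((Nx ∩ Nz).card : ℝ) ((Ntx ∩ Ntz).card : ℝ)
    (by positivity) (by positivity) ?_ ?_ ?_
    (by positivity) (by positivity) (by positivity)
    (by positivity) (by positivity) (by positivity) (by positivity)
    (by positivity) (by positivity) (by positivity)
    hdx hdy (by linarith) (by linarith) ?_ ?_ ?_ ?_ hlightx hlightz
  · linarith
  · have e1 : (1:ℝ) - (β + β') = 1 - β - β' := by ring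
    rw [e1]; exact hC
  · have e1 : (1:ℝ) - (β + β') = 1 - β - β' := by ring
    have e2 : (2:ℝ) - (β + β') = 2 - β - β' := by ring
    rw [e1, e2]; exact hT
  · exact_mod_cast hid1
  · exact_mod_cast hid2
  · exact_mod_cast hint
  · exact_mod_cast hint2
end

section
/- Combinatorial core of the lower bound (Theorem 1.2): Let m ≥ 1 be a natural number, let ε and δ be real numbers with 0 ≤ ε ≤ 1 and 0 ≤ δ ≤ 0.1, and let p : ({0,1}^m) × {1,…,m} → ℝ satisfy 0 ≤ p(τ, i) ≤ 1 for all τ and i, together with the privacy constraint: for every τ ∈ {0,1}^m and every i, p(τ[i←1], i) ≤ e^ε · p(τ[i←0], i) + δ, where τ[i←b] denotes τ with its i-th coordinate set to b. Then there exists τ ∈ {0,1}^m such that Σ_{i : τ_i = 0} p(τ, i) + Σ_{i : τ_i = 1} (1 − p(τ, i)) > m/10. -/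
open Real Finset

theorem lower_bound_combinatorial_core
    (m : ℕ) (hm : 1 ≤ m) (ε δ : ℝ)
    (hε0 : 0 ≤ ε) (hε1 : ε ≤ 1) (hδ0 : 0 ≤ δ) (hδ1 : δ ≤ 0.1)
    (p : (Fin m → Bool) → Fin m → ℝ)
    (hp0 : ∀ τ i, 0 ≤ p τ i) (hp1 : ∀ τ i, p τ i ≤ 1)
    (hpriv : ∀ (τ : Fin m → Bool) (i : Fin m),
      p (Function.update τ i true) i ≤ exp ε * p (Function.update τ i false) i + δ) :
    ∃ τ : Fin m → Bool,
      (∑ i ∈ univ.filter (fun i => τ i = false), p τ i)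
        + (∑ i ∈ univ.filter (fun i => τ i = true), (1 - p τ i)) > m / 10 := by
  classical
  set c : ℝ := (1 - δ) / exp ε with hc
  have hexp_pos : 0 < exp ε := exp_pos ε
  have hexp1 : 1 ≤ exp ε := one_le_exp hε0
  have he1 : exp 1 < 2.7182818286 := exp_one_lt_d9
  have hee : exp ε ≤ exp 1 := exp_le_exp.2 hε1
  have hc5 : c > 1/5 := by
    rw [hc, gt_iff_lt, lt_div_iff₀ hexp_pos]
    nlinarith
  -- pointwise key lemma
  have key : ∀ x y : ℝ, 0 ≤ x → y ≤ 1 → y ≤ exp ε * x + δ → c ≤ x + (1 - y) := by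
    intro x y hx hy hxy
    rcases le_or_gt c x with h | h
    · linarith
    · have h1 : exp ε * c = 1 - δ := by
        rw [hc]; field_simp
      have h2 : (exp ε - 1) * x ≤ (exp ε - 1) * c :=
        mul_le_mul_of_nonneg_left h.le (by linarith)
      nlinarith
  -- g τ i : cost contribution of coordinate i
  set g : (Fin m → Bool) → Fin m → ℝ := fun τ i => if τ i then 1 - p τ i else p τ i with hg
  -- flip involution
  have pair : ∀ (i : Fin m) (τ : Fin m → Bool),
      g τ i + g (Function.update τ i (!(τ i))) i
        = p (Function.update τ i false) i + (1 - p (Function.update τ i true) i) := by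
    intro i τ
    cases hτ : τ i with
    | false =>
        have hτeq : Function.update τ i false = τ := by
          rw [← hτ]; exact Function.update_eq_self i τ
        simp only [Bool.not_false]
        rw [hτeq]
        simp [hg, hτ, Function.update_self]
    | true =>
        have hτeq : Function.update τ i true = τ := by
          rw [← hτ]; exact Function.update_eq_self i τ
        simp only [Bool.not_true]
        rw [hτeq]
        simp [hg, hτ, Function.update_self]
        ring
  have flip_inv : ∀ i : Fin m, Function.Involutive
      (fun τ : Fin m → Bool => Function.update τ i (!(τ i))) := by
    intro i τ
    simp [Function.update_self, Function.update_idem, Bool.not_not,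
      Function.update_eq_self]
  have card_univ' : (univ : Finset (Fin m → Bool)).card = 2 ^ m := by
    simp [card_univ]
  -- lower bound for each coordinate sum
  have coord : ∀ i : Fin m, ((2:ℝ) ^ m) * c ≤ 2 * ∑ τ : Fin m → Bool, g τ i := by
    intro i
    have hb : ∑ τ : Fin m → Bool, g (Function.update τ i (!(τ i))) i
        = ∑ τ : Fin m → Bool, g τ i :=
      Fintype.sum_bijective _ (flip_inv i).bijective
        (fun τ => g (Function.update τ i (!(τ i))) i) (fun τ => g τ i) (fun τ => rfl)
    have : 2 * ∑ τ : Fin m → Bool, g τ i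
        = ∑ τ : Fin m → Bool, (g τ i + g (Function.update τ i (!(τ i))) i) := by
      rw [Finset.sum_add_distrib, hb]; ring
    rw [this]
    calc ((2:ℝ) ^ m) * c = ∑ _τ : Fin m → Bool, c := by
            rw [Finset.sum_const, card_univ']; push_cast; ring
      _ ≤ _ := by
            apply Finset.sum_le_sum
            intro τ _
            rw [pair i τ]
            exact key _ _ (hp0 _ _) (hp1 _ _) (hpriv τ i)
  -- total sum
  by_contra hcon
  push_neg at hcon
  have cost_eq : ∀ τ : Fin m → Bool,
      (∑ i ∈ univ.filter (fun i => τ i = false), p τ i)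
        + (∑ i ∈ univ.filter (fun i => τ i = true), (1 - p τ i))
      = ∑ i : Fin m, g τ i := by
    intro τ
    rw [Finset.sum_filter, Finset.sum_filter, ← Finset.sum_add_distrib]
    apply Finset.sum_congr rfl
    intro i _
    cases hτ : τ i <;> simp [hg, hτ]
  have hS_upper : ∑ τ : Fin m → Bool, ∑ i : Fin m, g τ i ≤ (2:ℝ)^m * (m / 10) := by
    calc ∑ τ : Fin m → Bool, ∑ i : Fin m, g τ i
        ≤ ∑ _τ : Fin m → Bool, (m:ℝ) / 10 := by
          apply Finset.sum_le_sum
          intro τ _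
          rw [← cost_eq τ]
          exact hcon τ
      _ = (2:ℝ)^m * (m / 10) := by
          rw [Finset.sum_const, card_univ']; push_cast; ring
  have hS_lower : (2:ℝ)^m * (m / 10) < ∑ τ : Fin m → Bool, ∑ i : Fin m, g τ i := by
    rw [Finset.sum_comm]
    have : ∑ i : Fin m, ((2:ℝ)^m * c / 2) ≤ ∑ i : Fin m, ∑ τ : Fin m → Bool, g τ i := by
      apply Finset.sum_le_sum
      intro i _
      have := coord i
      linarith
    have hms : ∑ i : Fin m, ((2:ℝ)^m * c / 2) = (m:ℝ) * ((2:ℝ)^m * c / 2) := by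
      rw [Finset.sum_const, card_univ, Fintype.card_fin]; push_cast; ring
    have hm1 : (1:ℝ) ≤ (m:ℝ) := by exact_mod_cast hm
    have hpow : (0:ℝ) < (2:ℝ)^m := by positivity
    have hmp : (0:ℝ) < (m:ℝ) * 2^m := mul_pos (by linarith) hpow
    have hmul := mul_lt_mul_of_pos_left hc5 hmp
    nlinarith [this, hms, hmul]
  linarith
end

section
/- Measure-theoretic form of the lower bound (Theorem 1.2): Let m ≥ 1 be a natural number and let ε, δ be real numbers with 0 ≤ ε ≤ 1 and 0 ≤ δ ≤ 0.1. Let M assign to each input τ ∈ {0,1}^m a probability measure M(τ) on the (finite, discrete) space {0,1}^m, such that for every pair of inputs τ, τ' differing in exactly one coordinate and every set S ⊆ {0,1}^m, M(τ)(S) ≤ e^ε · M(τ')(S) + δ. Then there exists an input τ ∈ {0,1}^m such that Σ_{i=1}^m M(τ)({o : o_i ≠ τ_i}) > m/10; that is, on some input the expected Hamming distance between the output and the input exceeds m/10. -/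
open MeasureTheory Real Finset

theorem lower_bound_measure_theoretic
    (m : ℕ) (hm : 1 ≤ m) (ε δ : ℝ)
    (hε0 : 0 ≤ ε) (hε1 : ε ≤ 1) (hδ0 : 0 ≤ δ) (hδ1 : δ ≤ 0.1)
    (M : (Fin m → Bool) → Measure (Fin m → Bool))
    (hprob : ∀ τ, IsProbabilityMeasure (M τ))
    (hpriv : ∀ τ τ' : Fin m → Bool,
      (univ.filter (fun i => τ i ≠ τ' i)).card = 1 →
      ∀ S : Set (Fin m → Bool),
        M τ S ≤ ENNReal.ofReal (exp ε) * M τ' S + ENNReal.ofReal δ) :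
    ∃ τ : Fin m → Bool,
      (∑ i : Fin m, (M τ {o | o i ≠ τ i}).toReal) > m / 10 := by
  classical
  set p : (Fin m → Bool) → Fin m → ℝ := fun τ i => (M τ {o | o i ≠ τ i}).toReal with hp
  set fl : Fin m → (Fin m → Bool) → (Fin m → Bool) :=
    fun i τ => Function.update τ i (!τ i) with hfl
  have hflfl : ∀ i τ, fl i (fl i τ) = τ := by
    intro i τ
    simp [hfl, Function.update_idem, Function.update_self, Function.update_eq_self]
  have hmeas : ∀ (i : Fin m) (b : Bool), MeasurableSet {o : Fin m → Bool | o i ≠ b} := by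
    intro i b
    have : {o : Fin m → Bool | o i ≠ b} = (fun o : Fin m → Bool => o i) ⁻¹' {x | x ≠ b} := rfl
    rw [this]
    exact measurable_pi_apply i (measurableSet_eq.compl)
  have key : ∀ (τ : Fin m → Bool) (i : Fin m), 1/5 < p τ i + p (fl i τ) i := by
    intro τ i
    have hcard : (univ.filter (fun j => τ j ≠ (fl i τ) j)).card = 1 := by
      have : (univ.filter (fun j => τ j ≠ (fl i τ) j)) = {i} := by
        ext j
        by_cases h : j = i
        · subst h; simp [hfl]
        · simp [hfl, Function.update_of_ne h, h]
      rw [this]; simp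
    have hA := hmeas i (τ i)
    have hc : {o : Fin m → Bool | o i ≠ (fl i τ) i} = {o : Fin m → Bool | o i ≠ τ i}ᶜ := by
      ext o
      simp [hfl, Function.update_self]
    have hpr := hpriv τ (fl i τ) hcard ({o : Fin m → Bool | o i ≠ τ i}ᶜ)
    have h1 : IsProbabilityMeasure (M τ) := hprob τ
    have h2 : IsProbabilityMeasure (M (fl i τ)) := hprob (fl i τ)
    -- complement measure
    have hcompl : (M τ ({o : Fin m → Bool | o i ≠ τ i}ᶜ)).toReal = 1 - p τ i := by
      rw [prob_compl_eq_one_sub hA]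
      rw [ENNReal.toReal_sub_of_le prob_le_one (by simp)]
      simp [hp]
    have hrhs : (M (fl i τ)) ({o : Fin m → Bool | o i ≠ τ i}ᶜ) ≠ ⊤ :=
      (measure_lt_top _ _).ne
    have hle : 1 - p τ i ≤ exp ε * p (fl i τ) i + δ := by
      have := ENNReal.toReal_mono (by
        refine ENNReal.add_ne_top.2 ⟨?_, ?_⟩
        · exact ENNReal.mul_ne_top ENNReal.ofReal_ne_top hrhs
        · exact ENNReal.ofReal_ne_top) hpr
      rw [hcompl] at this
      rw [ENNReal.toReal_add (ENNReal.mul_ne_top ENNReal.ofReal_ne_top hrhs)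
        ENNReal.ofReal_ne_top, ENNReal.toReal_mul, ENNReal.toReal_ofReal (exp_pos ε).le,
        ENNReal.toReal_ofReal hδ0] at this
      have hpq : (M (fl i τ) ({o : Fin m → Bool | o i ≠ τ i}ᶜ)).toReal = p (fl i τ) i := by
        rw [← hc]
      linarith [this, hpq ▸ this]
    have hexp1 : exp ε ≤ exp 1 := exp_le_exp.2 hε1
    have hexpe : exp 1 < 2.7182818286 := exp_one_lt_d9
    have hpos : (0:ℝ) < exp ε := exp_pos ε
    have hnn1 : 0 ≤ p τ i := ENNReal.toReal_nonneg
    have hnn2 : 0 ≤ p (fl i τ) i := ENNReal.toReal_nonneg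
    nlinarith [hle, hexp1, hexpe, hpos, hnn1, hnn2]
  -- averaging
  by_contra hcon
  push_neg at hcon
  have hsumτ : ∀ i : Fin m, ((Fintype.card (Fin m → Bool)) : ℝ) / 10 <
      ∑ τ : Fin m → Bool, p τ i := by
    intro i
    have hinv : ∑ τ : Fin m → Bool, p (fl i τ) i = ∑ τ : Fin m → Bool, p τ i := by
      apply Fintype.sum_bijective (fl i)
      · exact Function.Involutive.bijective (hflfl i)
      · intro τ; rfl
    have hs : ∑ τ : Fin m → Bool, (1/5 : ℝ) < ∑ τ : Fin m → Bool, (p τ i + p (fl i τ) i) :=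
      Finset.sum_lt_sum_of_nonempty (univ_nonempty) (fun τ _ => key τ i)
    rw [Finset.sum_add_distrib, hinv, Finset.sum_const] at hs
    have hcardpos : (0:ℝ) < Fintype.card (Fin m → Bool) := by
      exact_mod_cast Fintype.card_pos
    simp only [Finset.card_univ, nsmul_eq_mul] at hs
    linarith
  have htot : ((Fintype.card (Fin m → Bool)) : ℝ) * (m / 10) <
      ∑ τ : Fin m → Bool, ∑ i : Fin m, p τ i := by
    rw [Finset.sum_comm]
    have hne : (Finset.univ : Finset (Fin m)).Nonempty := by
      rw [Finset.univ_nonempty_iff]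
      exact ⟨⟨0, hm⟩⟩
    have : ∑ i : Fin m, ((Fintype.card (Fin m → Bool)) : ℝ) / 10 <
        ∑ i : Fin m, ∑ τ : Fin m → Bool, p τ i :=
      Finset.sum_lt_sum_of_nonempty hne (fun i _ => hsumτ i)
    rw [Finset.sum_const, Finset.card_univ, nsmul_eq_mul, Fintype.card_fin] at this
    calc ((Fintype.card (Fin m → Bool)) : ℝ) * (m / 10)
        = (m : ℝ) * (((Fintype.card (Fin m → Bool)) : ℝ) / 10) := by ring
      _ < _ := this
  have hub : ∑ τ : Fin m → Bool, ∑ i : Fin m, p τ i ≤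
      ((Fintype.card (Fin m → Bool)) : ℝ) * (m / 10) := by
    calc ∑ τ : Fin m → Bool, ∑ i : Fin m, p τ i
        ≤ ∑ τ : Fin m → Bool, ((m:ℝ) / 10) := Finset.sum_le_sum (fun τ _ => hcon τ)
      _ = _ := by rw [Finset.sum_const, Finset.card_univ, nsmul_eq_mul]
  linarith
end
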